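/- Let 0 ≤ a < 1, 0 < b < 1, C > 0 and ξ₀ > 0 be real numbers, and let U : [ξ₀, ∞) → ℝ be a differentiable, nonincreasing, nonnegative function satisfying U′(ξ) ≤ −C·ξ^{−a}·U(ξ)^{b} for all ξ ≥ ξ₀. Then U(ξ) = 0 for all ξ ≥ M, where M = ( ξ₀^{1−a} + ((1−a)/((1−b)·C))·U(ξ₀)^{1−b} )^{1/(1−a)}. -/

import Mathlib

/-- De Giorgi-type ODE lemma: a nonnegative nonincreasing differentiable function
satisfying `U′(ξ) ≤ −C ξ^{−a} U(ξ)^b` with `0 ≤ a < 1`, `0 < b < 1` vanishes beyond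
the explicit level `M`. -/
theorem deGiorgi_ode_lemma
    (a b C ξ₀ : ℝ) (ha0 : 0 ≤ a) (ha1 : a < 1) (hb0 : 0 < b) (hb1 : b < 1)
    (hC : 0 < C) (hξ₀ : 0 < ξ₀) (U : ℝ → ℝ)
    (hdiff : ∀ ξ ∈ Set.Ici ξ₀, DifferentiableAt ℝ U ξ)
    (hmono : AntitoneOn U (Set.Ici ξ₀))
    (hnonneg : ∀ ξ ∈ Set.Ici ξ₀, 0 ≤ U ξ)
    (hineq : ∀ ξ ∈ Set.Ici ξ₀, deriv U ξ ≤ -C * ξ ^ (-a) * U ξ ^ b) :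
    ∀ ξ ≥ (ξ₀ ^ (1 - a) + (1 - a) / ((1 - b) * C) * U ξ₀ ^ (1 - b)) ^ (1 / (1 - a)),
      U ξ = 0 := by
  have h1a : (0:ℝ) < 1 - a := by linarith
  have h1b : (0:ℝ) < 1 - b := by linarith
  set X : ℝ := ξ₀ ^ (1 - a) + (1 - a) / ((1 - b) * C) * U ξ₀ ^ (1 - b) with hXdef
  set M : ℝ := X ^ (1 / (1 - a)) with hMdef
  have hU₀ : 0 ≤ U ξ₀ := hnonneg ξ₀ (Set.mem_Ici.mpr le_rfl)
  have hXpos : 0 < X := by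
    have h1 : 0 < ξ₀ ^ (1 - a) := Real.rpow_pos_of_pos hξ₀ _
    have h2 : 0 ≤ (1 - a) / ((1 - b) * C) * U ξ₀ ^ (1 - b) := by
      apply mul_nonneg
      · positivity
      · exact Real.rpow_nonneg hU₀ _
    rw [hXdef]; linarith
  have hM1a : M ^ (1 - a) = X := by
    rw [hMdef, ← Real.rpow_mul hXpos.le, one_div_mul_cancel h1a.ne', Real.rpow_one]
  have hMξ₀ : ξ₀ ≤ M := by
    have h1 : ξ₀ = (ξ₀ ^ (1 - a)) ^ (1 / (1 - a)) := by
      rw [← Real.rpow_mul hξ₀.le, mul_one_div_cancel h1a.ne', Real.rpow_one]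
    rw [h1, hMdef]
    apply Real.rpow_le_rpow (Real.rpow_nonneg hξ₀.le _)
    · have : 0 ≤ (1 - a) / ((1 - b) * C) * U ξ₀ ^ (1 - b) := by
        apply mul_nonneg (by positivity) (Real.rpow_nonneg hU₀ _)
      rw [hXdef]; linarith
    · positivity
  have hMmem : M ∈ Set.Ici ξ₀ := hMξ₀
  have hUM : U M = 0 := by
    by_contra hne
    have hUMpos : 0 < U M := lt_of_le_of_ne (hnonneg M hMmem) (Ne.symm hne)
    have hUpos : ∀ x ∈ Set.Icc ξ₀ M, 0 < U x := fun x hx =>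
      lt_of_lt_of_le hUMpos (hmono (le_trans hx.1 (le_refl _) : x ∈ Set.Ici ξ₀) hMmem hx.2)
    set k : ℝ := (1 - b) * C / (1 - a) with hkdef
    have hkpos : 0 < k := by positivity
    set F : ℝ → ℝ := fun ξ => U ξ ^ (1 - b) + k * ξ ^ (1 - a) with hFdef
    have hanti : AntitoneOn F (Set.Icc ξ₀ M) := by
      have hder : ∀ x ∈ interior (Set.Icc ξ₀ M),
          HasDerivAt F (deriv U x * (1 - b) * U x ^ (1 - b - 1)
            + k * ((1 - a) * x ^ (1 - a - 1))) x := by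
        intro x hx
        rw [interior_Icc] at hx
        have hxIcc : x ∈ Set.Icc ξ₀ M := ⟨hx.1.le, hx.2.le⟩
        have hUx : 0 < U x := hUpos x hxIcc
        have hdU : HasDerivAt U (deriv U x) x :=
          (hdiff x hxIcc.1).hasDerivAt
        have h1 : HasDerivAt (fun y => U y ^ (1 - b))
            (deriv U x * (1 - b) * U x ^ (1 - b - 1)) x :=
          hdU.rpow_const (Or.inl hUx.ne')
        have h2 : HasDerivAt (fun y : ℝ => k * y ^ (1 - a))
            (k * ((1 - a) * x ^ (1 - a - 1))) x := by
          have hx0 : 0 < x := lt_of_lt_of_le hξ₀ hxIcc.1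
          exact (Real.hasDerivAt_rpow_const (Or.inl hx0.ne')).const_mul k
        exact h1.add h2
      apply antitoneOn_of_deriv_nonpos (convex_Icc ξ₀ M)
      · apply ContinuousOn.add
        · apply ContinuousOn.rpow_const
          · exact fun x hx => ((hdiff x hx.1).continuousAt).continuousWithinAt
          · exact fun x hx => Or.inr h1b.le
        · exact (continuousOn_const.mul (ContinuousOn.rpow_const continuousOn_id
            (fun x hx => Or.inr h1a.le)))
      · intro x hx
        exact ((hder x hx).differentiableAt).differentiableWithinAt
      · intro x hx
        rw [(hder x hx).deriv]
        rw [interior_Icc] at hx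
        have hxIcc : x ∈ Set.Icc ξ₀ M := ⟨hx.1.le, hx.2.le⟩
        have hUx : 0 < U x := hUpos x hxIcc
        have hx0 : 0 < x := lt_of_lt_of_le hξ₀ hxIcc.1
        have key : deriv U x * (1 - b) * U x ^ (1 - b - 1)
            ≤ -C * x ^ (-a) * U x ^ b * ((1 - b) * U x ^ (1 - b - 1)) := by
          have h := hineq x hxIcc.1
          have hc : 0 ≤ (1 - b) * U x ^ (1 - b - 1) :=
            mul_nonneg h1b.le (Real.rpow_nonneg hUx.le _)
          calc deriv U x * (1 - b) * U x ^ (1 - b - 1)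
              = deriv U x * ((1 - b) * U x ^ (1 - b - 1)) := by ring
            _ ≤ -C * x ^ (-a) * U x ^ b * ((1 - b) * U x ^ (1 - b - 1)) :=
              mul_le_mul_of_nonneg_right h hc
        have hrw : -C * x ^ (-a) * U x ^ b * ((1 - b) * U x ^ (1 - b - 1))
            = -((1 - b) * C * x ^ (-a)) := by
          have : U x ^ b * U x ^ (1 - b - 1) = U x ^ (0:ℝ) := by
            rw [← Real.rpow_add hUx]; ring_nf
          have h0 : U x ^ b * U x ^ (1 - b - 1) = 1 := by
            rw [this, Real.rpow_zero]
          calc -C * x ^ (-a) * U x ^ b * ((1 - b) * U x ^ (1 - b - 1))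
              = -C * x ^ (-a) * (1 - b) * (U x ^ b * U x ^ (1 - b - 1)) := by ring
            _ = -C * x ^ (-a) * (1 - b) * 1 := by rw [h0]
            _ = -((1 - b) * C * x ^ (-a)) := by ring
        have hrw2 : k * ((1 - a) * x ^ (1 - a - 1)) = (1 - b) * C * x ^ (-a) := by
          have : (1:ℝ) - a - 1 = -a := by ring
          rw [this, hkdef]
          field_simp
        rw [hrw2]
        rw [hrw] at key
        linarith
    have hF : F M ≤ F ξ₀ := hanti (Set.left_mem_Icc.mpr hMξ₀) (Set.right_mem_Icc.mpr hMξ₀) hMξ₀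
    have hkX : k * M ^ (1 - a) = k * ξ₀ ^ (1 - a) + U ξ₀ ^ (1 - b) := by
      rw [hM1a, hXdef, mul_add]
      congr 1
      rw [hkdef]
      field_simp
    have hcontra : U M ^ (1 - b) ≤ 0 := by
      simp only [hFdef] at hF
      linarith [hF, hkX.le, hkX.ge]
    exact absurd hcontra (not_le.mpr (Real.rpow_pos_of_pos hUMpos _))
  intro ξ hξ
  have hξmem : ξ ∈ Set.Ici ξ₀ := le_trans hMξ₀ hξ
  have h1 : U ξ ≤ U M := hmono hMmem hξmem hξ
  have h2 : 0 ≤ U ξ := hnonneg ξ hξmem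
  linarith [hUM ▸ h1]
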